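/- Let A be a Poisson algebra over a field k of characteristic 0 and ν a Poisson derivation of A. Write Ω^p := ⋀^p_A Ω_{A/k}, let ∂_ν be the twisted Koszul–Brylinski boundary and let d : Ω^p → Ω^{p+1} be k-linear maps with d(f₀ df₁ ∧ ⋯ ∧ df_p) = df₀ ∧ df₁ ∧ ⋯ ∧ df_p. Suppose f₀, f₁, …, f_n ∈ A are eigenvectors of ν, say ν(f_i) = λ_i f_i with λ_i ∈ k. Then (∂_ν ∘ d + d ∘ ∂_ν)(f₀ df₁ ∧ ⋯ ∧ df_n) = (λ₀ + λ₁ + ⋯ + λ_n) · f₀ df₁ ∧ ⋯ ∧ df_n. In particular, if λ₀ + ⋯ + λ_n = 0 then ∂_ν and d anticommute on f₀ df₁ ∧ ⋯ ∧ df_n, so the zero-weight part of the twisted Poisson chain complex is a mixed complex. -/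

import Mathlib

/-!
STATEMENT 5: On a wedge of eigenvectors of the Poisson derivation `ν`, the operator
`∂_ν ∘ d + d ∘ ∂_ν` acts by the sum of the eigenvalues.
-/

def consSkip2 {α : Type*} {n : ℕ} (x : α) (i j : Fin (n + 1)) (v : Fin (n + 1) → α) :
    Fin n → α :=
  fun t => if t.val = 0 then x
    else v ⟨if t.val - 1 < i.val then t.val - 1
            else if t.val < j.val then t.val else t.val + 1,
          by have ht := t.isLt; split_ifs <;> omega⟩

noncomputable def wedgeOfForms (k A : Type*) [CommRing k] [CommRing A] [Algebra k A]
    (p : ℕ) (ω : Fin p → Ω[A⁄k]) : ⋀[A]^p (Ω[A⁄k]) :=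
  ⟨ExteriorAlgebra.ιMulti A p ω, ExteriorAlgebra.ιMulti_range A p ⟨ω, rfl⟩⟩

section WedgeHelpers
variable {k A : Type*} [CommRing k] [CommRing A] [Algebra k A]

lemma wedge_swap (p : ℕ) (ω : Fin p → Ω[A⁄k]) {a b : Fin p} (h : a ≠ b) :
    wedgeOfForms k A p (ω ∘ Equiv.swap a b) = - wedgeOfForms k A p ω := by
  apply Subtype.ext
  show ExteriorAlgebra.ιMulti A p (ω ∘ Equiv.swap a b) = _
  rw [AlternatingMap.map_swap _ _ h]
  rfl

lemma wedge_cons_add (p : ℕ) (x y : Ω[A⁄k]) (w : Fin p → Ω[A⁄k]) :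
    wedgeOfForms k A (p+1) (Fin.cons (x + y) w) =
      wedgeOfForms k A (p+1) (Fin.cons x w) + wedgeOfForms k A (p+1) (Fin.cons y w) := by
  apply Subtype.ext
  show ExteriorAlgebra.ιMulti A (p+1) (Fin.cons (x+y) w) = _
  rw [show (ExteriorAlgebra.ιMulti A (p+1) (Fin.cons (x+y) w)) =
   (ExteriorAlgebra.ιMulti A (p+1)).toMultilinearMap (Fin.cons (x+y) w) from rfl,
   MultilinearMap.cons_add]
  rfl

lemma wedge_cons_smul (p : ℕ) (c : A) (x : Ω[A⁄k]) (w : Fin p → Ω[A⁄k]) :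
    wedgeOfForms k A (p+1) (Fin.cons (c • x) w) =
      c • wedgeOfForms k A (p+1) (Fin.cons x w) := by
  apply Subtype.ext
  show ExteriorAlgebra.ιMulti A (p+1) (Fin.cons (c • x) w) = _
  rw [show (ExteriorAlgebra.ιMulti A (p+1) (Fin.cons (c • x) w)) =
   (ExteriorAlgebra.ιMulti A (p+1)).toMultilinearMap (Fin.cons (c • x) w) from rfl,
   MultilinearMap.cons_smul]
  rfl

lemma wedge_insert (p : ℕ) (v : Fin (p+1) → Ω[A⁄k]) (i : Fin (p+1)) :
    wedgeOfForms k A (p+1) (Fin.cons (v i) (fun t => v (i.succAbove t))) =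
      ((-1:A)^(i:ℕ)) • wedgeOfForms k A (p+1) v := by
  have hperm : v = (Fin.cons (v i) (fun t => v (i.succAbove t)) : Fin (p+1) → Ω[A⁄k])
      ∘ i.cycleRange := by
    funext t
    refine Fin.succAboveCases i ?_ ?_ t
    · simp [Fin.cycleRange_self]
    · intro j
      simp [Fin.cycleRange_succAbove]
  have hmp := AlternatingMap.map_perm (g := ExteriorAlgebra.ιMulti A (p+1))
    (Fin.cons (v i) (fun t => v (i.succAbove t))) i.cycleRange
  apply Subtype.ext
  show ExteriorAlgebra.ιMulti A (p+1) _ = ((-1:A)^(i:ℕ)) • ExteriorAlgebra.ιMulti A (p+1) v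
  conv_rhs => rw [hperm, hmp, Fin.sign_cycleRange]
  simp only [Units.smul_def, Units.val_pow_eq_pow_val, Units.val_neg, Units.val_one]
  rw [← Int.cast_smul_eq_zsmul A ((-1:ℤ)^(i:ℕ))]
  push_cast
  rw [smul_smul, ← pow_add, Even.neg_one_pow ⟨(i:ℕ), rfl⟩, one_smul]
end WedgeHelpers
section FinLemmas
variable {α β : Type*} {n : ℕ}

lemma consSkip2_comp (F : α → β) (x : α) (i j : Fin (n+1)) (v : Fin (n+1) → α) :
    consSkip2 (F x) i j (fun s => F (v s)) = fun t => F (consSkip2 x i j v t) := by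
  funext t
  simp only [consSkip2]
  split <;> rfl

lemma cons_mk_succ (x : α) (v : Fin n → α) (s : ℕ) (h : s + 1 < n + 1) :
    (Fin.cons x v : Fin (n+1) → α) ⟨s+1, h⟩ = v ⟨s, by omega⟩ := by
  rw [show (⟨s+1, h⟩ : Fin (n+1)) = Fin.succ ⟨s, by omega⟩ from rfl, Fin.cons_succ]

lemma consSkip2_zero_succ (x y : α) (j : Fin (n+1)) (v : Fin (n+1) → α) :
    consSkip2 x (0 : Fin (n+2)) j.succ (Fin.cons y v) =
      Fin.cons x (fun s => v (j.succAbove s)) := by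
  funext t
  rcases t with ⟨tv, ht⟩
  match tv with
  | 0 => rfl
  | s+1 =>
    simp only [consSkip2]
    rw [if_neg (Nat.succ_ne_zero s)]
    rw [cons_mk_succ]
    by_cases hs : s < j.val
    · rw [Fin.succAbove_of_castSucc_lt _ _ (by simpa [Fin.lt_def] using hs)]
      have : (if s + 1 - 1 < (0 : Fin (n+2)).val then s + 1 - 1
          else if s + 1 < (j.succ).val then s + 1 else s + 1 + 1) = s + 1 := by
        rw [if_neg (by simp)]
        simp only [Fin.val_succ]
        split_ifs <;> omega
      rw [show (⟨if s + 1 - 1 < (0 : Fin (n+2)).val then s + 1 - 1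
          else if s + 1 < (j.succ).val then s + 1 else s + 1 + 1, by omega⟩ : Fin (n+2))
          = ⟨s+1, by omega⟩ from Fin.ext this]
      rw [cons_mk_succ]
      rfl
    · rw [Fin.succAbove_of_le_castSucc _ _ (by simp [Fin.le_def]; omega)]
      have : (if s + 1 - 1 < (0 : Fin (n+2)).val then s + 1 - 1
          else if s + 1 < (j.succ).val then s + 1 else s + 1 + 1) = s + 2 := by
        rw [if_neg (by simp)]
        simp only [Fin.val_succ]
        split_ifs <;> omega
      rw [show (⟨if s + 1 - 1 < (0 : Fin (n+2)).val then s + 1 - 1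
          else if s + 1 < (j.succ).val then s + 1 else s + 1 + 1, by omega⟩ : Fin (n+2))
          = ⟨s+2, by omega⟩ from Fin.ext this]
      rw [cons_mk_succ]
      rfl
end FinLemmas

section FinLemmas2
variable {α : Type*} {n : ℕ}

lemma consSkip2_succ_succ (x y : α) (i j : Fin (n+1)) (v : Fin (n+1) → α)
    (h01 : (0 : Fin (n+1)) ≠ 1) :
    consSkip2 x i.succ j.succ (Fin.cons y v) =
      (Fin.cons y (consSkip2 x i j v)) ∘ Equiv.swap 0 1 := by
  have hn : 0 < n := by
    rcases n with _ | m
    · exact absurd (by decide) h01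
    · omega
  have h1 : (1 : Fin (n+1)) = ⟨1, by omega⟩ :=
    Fin.ext (by rw [Fin.val_one', Nat.mod_eq_of_lt (by omega)])
  have hi := i.isLt
  have hj := j.isLt
  funext t
  rcases t with ⟨tv, ht⟩
  match tv, ht with
  | 0, ht =>
    simp only [consSkip2, Function.comp_apply]
    rw [if_pos trivial, show (⟨0, ht⟩ : Fin (n+1)) = 0 from Fin.ext (by simp),
      Equiv.swap_apply_left, h1, cons_mk_succ]
    simp [consSkip2]
  | 1, ht =>
    simp only [consSkip2, Function.comp_apply]
    have hA : (if 1 - 1 < (i.succ).val then 1 - 1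
        else if 1 < (j.succ).val then 1 else 1 + 1) = 0 := by
      simp only [Fin.val_succ]; split_ifs <;> omega
    rw [if_neg one_ne_zero,
      show (⟨if 1 - 1 < (i.succ).val then 1 - 1
        else if 1 < (j.succ).val then 1 else 1 + 1, by split_ifs <;> omega⟩ : Fin (n+2))
        = ⟨0, by omega⟩ from Fin.ext hA,
      show (⟨1, ht⟩ : Fin (n+1)) = 1 from Fin.ext (by rw [h1]),
      Equiv.swap_apply_right]
    rfl
  | s+2, ht =>
    simp only [consSkip2, Function.comp_apply]
    rw [if_neg (Nat.succ_ne_zero _)]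
    rw [Equiv.swap_apply_of_ne_of_ne
      (by exact Fin.ne_of_val_ne (by simp))
      (by exact Fin.ne_of_val_ne (by rw [h1]; simp)),
      cons_mk_succ]
    rw [show consSkip2 x i j v ⟨s+1, by omega⟩
        = v ⟨if s + 1 - 1 < i.val then s + 1 - 1
            else if s + 1 < j.val then s + 1 else s + 1 + 1, by split_ifs <;> omega⟩ from by
      simp only [consSkip2]; rw [if_neg (Nat.succ_ne_zero s)]]
    by_cases hc1 : s < i.val
    · have hA : (if s + 2 - 1 < (i.succ).val then s + 2 - 1
          else if s + 2 < (j.succ).val then s + 2 else s + 2 + 1) = s + 1 := by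
        simp only [Fin.val_succ]; split_ifs <;> omega
      have hB : (if s + 1 - 1 < i.val then s + 1 - 1
          else if s + 1 < j.val then s + 1 else s + 1 + 1) = s := by
        split_ifs <;> omega
      rw [show (⟨if s + 2 - 1 < (i.succ).val then s + 2 - 1
          else if s + 2 < (j.succ).val then s + 2 else s + 2 + 1, by split_ifs <;> omega⟩ : Fin (n+2))
          = ⟨s+1, by omega⟩ from Fin.ext hA,
        cons_mk_succ]
      exact congrArg v (Fin.ext hB.symm)
    · by_cases hc2 : s + 1 < j.val
      · have hA : (if s + 2 - 1 < (i.succ).val then s + 2 - 1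
            else if s + 2 < (j.succ).val then s + 2 else s + 2 + 1) = s + 2 := by
          simp only [Fin.val_succ]; split_ifs <;> omega
        have hB : (if s + 1 - 1 < i.val then s + 1 - 1
            else if s + 1 < j.val then s + 1 else s + 1 + 1) = s + 1 := by
          split_ifs <;> omega
        rw [show (⟨if s + 2 - 1 < (i.succ).val then s + 2 - 1
            else if s + 2 < (j.succ).val then s + 2 else s + 2 + 1, by split_ifs <;> omega⟩ : Fin (n+2))
            = ⟨s+2, by omega⟩ from Fin.ext hA,
          cons_mk_succ]
        exact congrArg v (Fin.ext hB.symm)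
      · have hA : (if s + 2 - 1 < (i.succ).val then s + 2 - 1
            else if s + 2 < (j.succ).val then s + 2 else s + 2 + 1) = s + 3 := by
          simp only [Fin.val_succ]; split_ifs <;> omega
        have hB : (if s + 1 - 1 < i.val then s + 1 - 1
            else if s + 1 < j.val then s + 1 else s + 1 + 1) = s + 2 := by
          split_ifs <;> omega
        rw [show (⟨if s + 2 - 1 < (i.succ).val then s + 2 - 1
            else if s + 2 < (j.succ).val then s + 2 else s + 2 + 1, by split_ifs <;> omega⟩ : Fin (n+2))
            = ⟨s+3, by omega⟩ from Fin.ext hA,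
          cons_mk_succ]
        exact congrArg v (Fin.ext hB.symm)
end FinLemmas2

/-- The generator `f₀ df₁ ∧ ⋯ ∧ df_p` of `⋀^p_A Ω_{A/k}`. -/
noncomputable def genForm (k A : Type*) [CommRing k] [CommRing A] [Algebra k A]
    (p : ℕ) (f₀ : A) (f : Fin p → A) : ⋀[A]^p (Ω[A⁄k]) :=
  f₀ • wedgeOfForms k A p (fun i => KaehlerDifferential.D k A (f i))

/-- The defining formula of the twisted Koszul–Brylinski boundary `∂_ν : Ω^{p+1} → Ω^p`. -/
def IsTwistedKBBoundary (k A : Type*) [CommRing k] [CommRing A] [Algebra k A]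
    (br : A → A → A) (ν : A → A) (p : ℕ)
    (bd : (⋀[A]^(p + 1) (Ω[A⁄k])) →+ ⋀[A]^p (Ω[A⁄k])) : Prop :=
  ∀ (f₀ : A) (f : Fin (p + 1) → A),
    bd (genForm k A (p + 1) f₀ f) =
      (∑ i : Fin (p + 1), (-1 : ℤ) ^ (i : ℕ) •
          ((br f₀ (f i) + f₀ * ν (f i)) •
            wedgeOfForms k A p (fun t => KaehlerDifferential.D k A (f (i.succAbove t)))))
      + ∑ i : Fin (p + 1), ∑ j : Fin (p + 1),
          if i < j then
            (-1 : ℤ) ^ ((i : ℕ) + (j : ℕ)) •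
              (f₀ • wedgeOfForms k A p
                (consSkip2 (KaehlerDifferential.D k A (br (f i) (f j))) i j
                  (fun s => KaehlerDifferential.D k A (f s))))
          else 0

/-- The defining formula of the de Rham differential `d : Ω^p → Ω^{p+1}`. -/
def IsDeRhamDiff (k A : Type*) [CommRing k] [CommRing A] [Algebra k A] (p : ℕ)
    (d : (⋀[A]^p (Ω[A⁄k])) →+ ⋀[A]^(p + 1) (Ω[A⁄k])) : Prop :=
  ∀ (f₀ : A) (f : Fin p → A),
    d (genForm k A p f₀ f) =
      wedgeOfForms k A (p + 1)
        (Fin.cons (KaehlerDifferential.D k A f₀) (fun i => KaehlerDifferential.D k A (f i)))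

set_option maxHeartbeats 2000000 in
theorem eigenweight_homotopy
    {k A : Type*} [Field k] [CharZero k] [CommRing A] [Algebra k A]
    (br : A →ₗ[k] A →ₗ[k] A)
    (hanti : ∀ a b : A, br a b = - br b a)
    (hjacobi : ∀ a b c : A, br a (br b c) = br (br a b) c + br b (br a c))
    (hleibniz : ∀ a b c : A, br a (b * c) = br a b * c + b * br a c)
    (ν : A →ₗ[k] A)
    (hνder : ∀ a b : A, ν (a * b) = ν a * b + a * ν b)
    (hνbr : ∀ a b : A, ν (br a b) = br (ν a) b + br a (ν b)) :
    -- on `f₀ df₁ ∧ ⋯ ∧ df_{p+1}` (the forms of degree ≥ 1) …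
    (∀ (p : ℕ)
        (bd₀ : (⋀[A]^(p + 1) (Ω[A⁄k])) →+ ⋀[A]^p (Ω[A⁄k]))
        (bd₁ : (⋀[A]^(p + 2) (Ω[A⁄k])) →+ ⋀[A]^(p + 1) (Ω[A⁄k]))
        (d₀ : (⋀[A]^p (Ω[A⁄k])) →+ ⋀[A]^(p + 1) (Ω[A⁄k]))
        (d₁ : (⋀[A]^(p + 1) (Ω[A⁄k])) →+ ⋀[A]^(p + 2) (Ω[A⁄k])),
        IsTwistedKBBoundary k A (fun a b => br a b) (fun a => ν a) p bd₀ →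
        IsTwistedKBBoundary k A (fun a b => br a b) (fun a => ν a) (p + 1) bd₁ →
        IsDeRhamDiff k A p d₀ → IsDeRhamDiff k A (p + 1) d₁ →
        ∀ (f₀ : A) (f : Fin (p + 1) → A) (lam₀ : k) (lam : Fin (p + 1) → k),
          ν f₀ = algebraMap k A lam₀ * f₀ →
          (∀ i, ν (f i) = algebraMap k A (lam i) * f i) →
          bd₁ (d₁ (genForm k A (p + 1) f₀ f)) + d₀ (bd₀ (genForm k A (p + 1) f₀ f))
            = algebraMap k A (lam₀ + ∑ i, lam i) • genForm k A (p + 1) f₀ f) ∧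
    -- … and in degree 0, where `∂_ν` vanishes:
    (∀ (bd₀ : (⋀[A]^1 (Ω[A⁄k])) →+ ⋀[A]^0 (Ω[A⁄k]))
        (d₀ : (⋀[A]^0 (Ω[A⁄k])) →+ ⋀[A]^1 (Ω[A⁄k])),
        IsTwistedKBBoundary k A (fun a b => br a b) (fun a => ν a) 0 bd₀ →
        IsDeRhamDiff k A 0 d₀ →
        ∀ (f₀ : A) (lam₀ : k), ν f₀ = algebraMap k A lam₀ * f₀ →
          bd₀ (d₀ (genForm k A 0 f₀ (fun i => i.elim0)))
            = algebraMap k A lam₀ • genForm k A 0 f₀ (fun i => i.elim0)) := by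
  have hbr_one : ∀ a : A, br a 1 = 0 := by
    intro a
    have h := hleibniz a 1 1
    rw [mul_one, mul_one, one_mul] at h
    exact (left_eq_add.mp h)
  have hone_br : ∀ a : A, br 1 a = 0 := fun a => by rw [hanti, hbr_one, neg_zero]
  constructor
  · intro p bd₀ bd₁ d₀ d₁ hbd₀ hbd₁ hd₀ hd₁ f₀ f lam₀ lam hf₀ hf
    have hzA : ∀ (m : ℕ) (x : ⋀[A]^(p+1) (Ω[A⁄k])), (-1:ℤ)^m • x = ((-1:A)^m) • x := by
      intro m x
      rw [← Int.cast_smul_eq_zsmul A]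
      push_cast
      rfl
    have hDcons : (fun s => KaehlerDifferential.D k A ((Fin.cons f₀ f : Fin (p+2) → A) s)) =
        Fin.cons (KaehlerDifferential.D k A f₀) (fun s => KaehlerDifferential.D k A (f s)) := by
      funext s
      refine Fin.cases ?_ ?_ s
      · simp
      · intro u; simp
    have step1 : d₁ (genForm k A (p+1) f₀ f) = genForm k A (p+2) 1 (Fin.cons f₀ f) := by
      rw [hd₁ f₀ f]
      show _ = (1:A) • wedgeOfForms k A (p+2) (fun s => KaehlerDifferential.D k A ((Fin.cons f₀ f : Fin (p+2) → A) s))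
      rw [one_smul, hDcons]
    rw [step1, hbd₁ 1 (Fin.cons f₀ f), hbd₀ f₀ f, map_add]
    simp only [map_sum]
    have hsing : ∀ i : Fin (p+1),
        d₀ ((-1:ℤ)^(i:ℕ) • ((br f₀ (f i) + f₀ * ν (f i)) •
          wedgeOfForms k A p (fun t => KaehlerDifferential.D k A (f (i.succAbove t)))))
        = (-1:ℤ)^(i:ℕ) • wedgeOfForms k A (p+1)
            (Fin.cons (KaehlerDifferential.D k A (br f₀ (f i) + f₀ * ν (f i)))
              (fun t => KaehlerDifferential.D k A (f (i.succAbove t)))) := by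
      intro i
      rw [map_zsmul]
      congr 1
      exact hd₀ _ (fun t => f (i.succAbove t))
    have hdoub : ∀ i j : Fin (p+1),
        d₀ (if i < j then (-1:ℤ)^((i:ℕ)+(j:ℕ)) • (f₀ •
            wedgeOfForms k A p (consSkip2 (KaehlerDifferential.D k A (br (f i) (f j))) i j
              (fun s => KaehlerDifferential.D k A (f s)))) else 0)
        = (if i < j then (-1:ℤ)^((i:ℕ)+(j:ℕ)) • wedgeOfForms k A (p+1)
            (Fin.cons (KaehlerDifferential.D k A f₀)
              (fun t => KaehlerDifferential.D k A (consSkip2 (br (f i) (f j)) i j f t))) else 0) := by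
      intro i j
      split_ifs with h
      · rw [map_zsmul]
        congr 1
        rw [consSkip2_comp (fun a => KaehlerDifferential.D k A a) (br (f i) (f j)) i j f]
        exact hd₀ f₀ (fun t => consSkip2 (br (f i) (f j)) i j f t)
      · exact map_zero d₀
    simp only [hsing, hdoub, hone_br, zero_add, one_mul, one_smul, hDcons, hzA]
    have h1 : (∑ x : Fin (p + 1 + 1), (-1:A) ^ (x:ℕ) •
            ν ((Fin.cons f₀ f : Fin (p+2) → A) x) •
              wedgeOfForms k A (p + 1)
                (fun t => KaehlerDifferential.D k A ((Fin.cons f₀ f : Fin (p+2) → A) (x.succAbove t))))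
        = (algebraMap k A lam₀ * f₀) • wedgeOfForms k A (p+1)
            (fun t => KaehlerDifferential.D k A (f t))
          + -∑ i : Fin (p + 1), (-1:A) ^ (i:ℕ) • ν (f i) •
              wedgeOfForms k A (p + 1)
                (Fin.cons (KaehlerDifferential.D k A f₀)
                  (fun t => KaehlerDifferential.D k A (f (i.succAbove t)))) := by
      rw [Fin.sum_univ_succ]
      congr 1
      · simp only [Fin.val_zero, pow_zero, one_smul, Fin.cons_zero, Fin.succAbove_zero,
          Fin.cons_succ, hf₀]
      · rw [← Finset.sum_neg_distrib]
        refine Finset.sum_congr rfl fun i _ => ?_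
        have hfam : (fun t => KaehlerDifferential.D k A
              ((Fin.cons f₀ f : Fin (p+2) → A) (i.succ.succAbove t)))
            = Fin.cons (KaehlerDifferential.D k A f₀)
                (fun t => KaehlerDifferential.D k A (f (i.succAbove t))) := by
          funext t
          refine Fin.cases ?_ ?_ t
          · simp [Fin.succ_succAbove_zero]
          · intro u; simp [Fin.succ_succAbove_succ]
        simp only [Fin.val_succ, Fin.cons_succ, hfam]
        rw [pow_succ, mul_neg_one]
        module
    have h2 : (∑ x : Fin (p + 1 + 1), ∑ y : Fin (p + 1 + 1),
          if x < y then (-1:A) ^ ((x:ℕ) + (y:ℕ)) •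
              wedgeOfForms k A (p + 1)
                (consSkip2 (KaehlerDifferential.D k A
                    (br ((Fin.cons f₀ f : Fin (p+2) → A) x) ((Fin.cons f₀ f : Fin (p+2) → A) y)))
                  x y
                  (Fin.cons (KaehlerDifferential.D k A f₀)
                    (fun s => KaehlerDifferential.D k A (f s))))
          else 0)
        = -∑ i : Fin (p + 1), (-1:A) ^ (i:ℕ) •
              wedgeOfForms k A (p + 1)
                (Fin.cons (KaehlerDifferential.D k A (br f₀ (f i)))
                  (fun t => KaehlerDifferential.D k A (f (i.succAbove t))))
          + -∑ i : Fin (p + 1), ∑ j : Fin (p + 1),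
              (if i < j then (-1:A) ^ ((i:ℕ) + (j:ℕ)) •
                wedgeOfForms k A (p + 1)
                  (Fin.cons (KaehlerDifferential.D k A f₀)
                    (fun t => KaehlerDifferential.D k A (consSkip2 (br (f i) (f j)) i j f t)))
              else 0) := by
      rw [Fin.sum_univ_succ]
      congr 1
      · rw [Fin.sum_univ_succ, if_neg (lt_irrefl (0 : Fin (p+2))), zero_add,
          ← Finset.sum_neg_distrib]
        refine Finset.sum_congr rfl fun j _ => ?_
        rw [if_pos (Fin.succ_pos j), Fin.cons_zero, Fin.cons_succ, consSkip2_zero_succ]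
        simp only [Fin.val_zero, Fin.val_succ, zero_add]
        rw [pow_succ, mul_neg_one]
        module
      · rw [← Finset.sum_neg_distrib]
        refine Finset.sum_congr rfl fun i _ => ?_
        rw [Fin.sum_univ_succ, if_neg (Fin.not_lt_zero _), zero_add, ← Finset.sum_neg_distrib]
        refine Finset.sum_congr rfl fun j _ => ?_
        by_cases h : i < j
        · have h01 : (0 : Fin (p+1)) ≠ 1 := by
            have hj1 : 1 ≤ (j:ℕ) := by rw [Fin.lt_def] at h; omega
            have hp : 1 ≤ p := by have := j.isLt; omega
            intro e
            have he := congrArg Fin.val e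
            rw [Fin.val_zero, Fin.val_one', Nat.mod_eq_of_lt (by omega)] at he
            omega
          rw [if_pos (Fin.succ_lt_succ_iff.mpr h), if_pos h]
          rw [Fin.cons_succ, Fin.cons_succ, consSkip2_succ_succ _ _ _ _ _ h01,
            wedge_swap _ _ h01,
            consSkip2_comp (fun a => KaehlerDifferential.D k A a) (br (f i) (f j)) i j f,
            Fin.val_succ, Fin.val_succ,
            show ((i:ℕ)+1) + ((j:ℕ)+1) = ((i:ℕ)+(j:ℕ)) + 2 from by omega,
            pow_add, neg_one_sq, mul_one, smul_neg]
        · rw [if_neg (fun hc => h (Fin.succ_lt_succ_iff.mp hc)), if_neg h, neg_zero]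
    have hDmul : ∀ i : Fin (p+1), KaehlerDifferential.D k A (f₀ * ν (f i))
        = ν (f i) • KaehlerDifferential.D k A f₀
          + (f₀ * algebraMap k A (lam i)) • KaehlerDifferential.D k A (f i) := by
      intro i
      rw [Derivation.leibniz, hf i, Derivation.leibniz, Derivation.map_algebraMap,
        smul_zero, add_zero, smul_smul, add_comm]
    have h3 : (∑ x : Fin (p + 1), (-1:A) ^ (x:ℕ) •
            wedgeOfForms k A (p + 1)
              (Fin.cons (KaehlerDifferential.D k A (br f₀ (f x) + f₀ * ν (f x)))
                (fun t => KaehlerDifferential.D k A (f (x.succAbove t)))))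
        = ∑ i : Fin (p + 1), (-1:A) ^ (i:ℕ) •
              wedgeOfForms k A (p + 1)
                (Fin.cons (KaehlerDifferential.D k A (br f₀ (f i)))
                  (fun t => KaehlerDifferential.D k A (f (i.succAbove t))))
          + (∑ i : Fin (p + 1), (-1:A) ^ (i:ℕ) • ν (f i) •
              wedgeOfForms k A (p + 1)
                (Fin.cons (KaehlerDifferential.D k A f₀)
                  (fun t => KaehlerDifferential.D k A (f (i.succAbove t))))
            + (f₀ * algebraMap k A (∑ i, lam i)) • wedgeOfForms k A (p+1)
                (fun t => KaehlerDifferential.D k A (f t))) := by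
      have hterm : ∀ i : Fin (p+1), (-1:A) ^ (i:ℕ) •
            wedgeOfForms k A (p + 1)
              (Fin.cons (KaehlerDifferential.D k A (br f₀ (f i) + f₀ * ν (f i)))
                (fun t => KaehlerDifferential.D k A (f (i.succAbove t))))
          = (-1:A) ^ (i:ℕ) •
              wedgeOfForms k A (p + 1)
                (Fin.cons (KaehlerDifferential.D k A (br f₀ (f i)))
                  (fun t => KaehlerDifferential.D k A (f (i.succAbove t))))
            + ((-1:A) ^ (i:ℕ) • ν (f i) •
              wedgeOfForms k A (p + 1)
                (Fin.cons (KaehlerDifferential.D k A f₀)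
                  (fun t => KaehlerDifferential.D k A (f (i.succAbove t))))
              + (f₀ * algebraMap k A (lam i)) • wedgeOfForms k A (p+1)
                  (fun t => KaehlerDifferential.D k A (f t))) := by
        intro i
        rw [map_add, wedge_cons_add, hDmul i, wedge_cons_add, wedge_cons_smul, wedge_cons_smul,
          wedge_insert (p := p) (fun t => KaehlerDifferential.D k A (f t)) i,
          smul_add, smul_add, smul_smul ((-1:A) ^ (i:ℕ)), smul_smul, smul_smul,
          show ((-1:A) ^ (i:ℕ) * (f₀ * algebraMap k A (lam i))) * (-1:A) ^ (i:ℕ)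
              = f₀ * algebraMap k A (lam i) from by
            rw [mul_comm, ← mul_assoc, ← pow_add, Even.neg_one_pow ⟨(i:ℕ), rfl⟩, one_mul]]
      rw [Finset.sum_congr rfl (fun i _ => hterm i), Finset.sum_add_distrib,
        Finset.sum_add_distrib, ← Finset.sum_smul, ← Finset.mul_sum, ← map_sum]
    rw [h1, h2, h3]
    have hR : algebraMap k A (lam₀ + ∑ i, lam i) • genForm k A (p+1) f₀ f
        = (algebraMap k A lam₀ * f₀) • wedgeOfForms k A (p+1)
            (fun t => KaehlerDifferential.D k A (f t))
          + (f₀ * algebraMap k A (∑ i, lam i)) • wedgeOfForms k A (p+1)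
              (fun t => KaehlerDifferential.D k A (f t)) := by
      show algebraMap k A (lam₀ + ∑ i, lam i) • (f₀ • wedgeOfForms k A (p+1)
            (fun t => KaehlerDifferential.D k A (f t))) = _
      rw [smul_smul, map_add, add_mul, add_smul, mul_comm (algebraMap k A (∑ i, lam i)) f₀]
    rw [hR]
    abel
  · intro bd₀ d₀ hbd₀ hd₀ f₀ lam₀ hf₀
    have step1 : d₀ (genForm k A 0 f₀ (fun i => i.elim0)) = genForm k A 1 1 (fun _ => f₀) := by
      rw [hd₀ f₀ (fun i => i.elim0)]
      show _ = (1:A) • wedgeOfForms k A 1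
        (fun i => KaehlerDifferential.D k A ((fun _ : Fin 1 => f₀) i))
      rw [one_smul]
      congr 1
      funext i
      refine Fin.cases ?_ (fun u => u.elim0) i
      rfl
    rw [step1, hbd₀ 1 (fun _ => f₀)]
    simp only [Fin.sum_univ_succ, Fin.sum_univ_zero, lt_self_iff_false, if_false, add_zero,
      hone_br, zero_add, one_mul, Fin.val_zero, pow_zero, one_smul, hf₀]
    show _ = algebraMap k A lam₀ • (f₀ • wedgeOfForms k A 0
      (fun i : Fin 0 => KaehlerDifferential.D k A (i.elim0)))
    rw [smul_smul]
    exact congrArg _ (congrArg (wedgeOfForms k A 0) (funext fun t : Fin 0 => t.elim0))
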